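/- For all real λ > 0, β > 0, every integer n ≥ 1 and all reals u > 0, v > 0, ∫₀^∞ e^{-u t} · e^{-β t} · (λ/(λ + v)) · Σ_{k=1}^{n} (β t)^{k-1} E_{n,k}(λ (β t)^n/(λ + v)) dt = λ ((β + u)^n - β^n) / ( u · ((λ + v)(β + u)^n - λ β^n) ). -/

import Mathlib

open Real MeasureTheory Filter Finset

/-- Wright function `Φ(ρ, δ, z) = Σ_{j≥0} z^j / (j! Γ(ρ j + δ))`. -/
noncomputable def wright (ρ δ z : ℝ) : ℝ :=
  ∑' j : ℕ, z ^ j / ((Nat.factorial j : ℝ) * Real.Gamma (ρ * (j : ℝ) + δ))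

/-- Wright function with second parameter 0:
`Φ(ρ, 0, z) = Σ_{j≥1} z^j / (j! Γ(ρ j))`. -/
noncomputable def wright0 (ρ z : ℝ) : ℝ :=
  ∑' j : ℕ, z ^ (j + 1) /
    ((Nat.factorial (j + 1) : ℝ) * Real.Gamma (ρ * ((j : ℝ) + 1)))

/-- Two-parameter Mittag-Leffler function `E_{ρ,δ}(z) = Σ_{j≥0} z^j / Γ(ρ j + δ)`. -/
noncomputable def ml2 (ρ δ z : ℝ) : ℝ :=
  ∑' j : ℕ, z ^ j / Real.Gamma (ρ * (j : ℝ) + δ)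

/-- Three-parameter generalized Mittag-Leffler function
`E^γ_{ρ,δ}(z) = Σ_{j≥0} (Γ(γ+j)/Γ(γ)) z^j / (j! Γ(ρ j + δ))`. -/
noncomputable def ml3 (γ ρ δ z : ℝ) : ℝ :=
  ∑' j : ℕ, (Real.Gamma (γ + (j : ℝ)) / Real.Gamma γ) * z ^ j /
    ((Nat.factorial j : ℝ) * Real.Gamma (ρ * (j : ℝ) + δ))

/-- Modified Bessel function of the first kind of order 0:
`I₀(z) = Σ_{j≥0} (z/2)^{2j} / (j!)²`. -/
noncomputable def besselI0 (z : ℝ) : ℝ :=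
  ∑' j : ℕ, (z / 2) ^ (2 * j) / ((Nat.factorial j : ℝ) * (Nat.factorial j : ℝ))


/-- the (i,j) summand: `c^(j+1) β^(nj+i)/(nj+i)! * (t^(nj+i) e^{-(β+u)t})` -/
noncomputable def hfun (c β s : ℝ) (n i j : ℕ) (t : ℝ) : ℝ :=
  c ^ (j + 1) * β ^ (n * j + i) / ((n * j + i).factorial : ℝ) *
    (t ^ (n * j + i) * Real.exp (-(s * t)))

lemma hfun_nonneg {c β s : ℝ} (hc : 0 ≤ c) (hβ : 0 ≤ β) (n i j : ℕ) {t : ℝ} (ht : 0 ≤ t) :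
    0 ≤ hfun c β s n i j t := by
  unfold hfun; positivity

lemma summable_hfun {c β s : ℝ} (hc0 : 0 ≤ c) (hc1 : c ≤ 1) (hβ : 0 ≤ β)
    {n : ℕ} (hn : 1 ≤ n) (i : ℕ) {t : ℝ} (ht : 0 ≤ t) :
    Summable (fun j => hfun c β s n i j t) := by
  have hinj : Function.Injective (fun j => n * j + i) := by
    intro a b hab
    simp only at hab
    exact Nat.eq_of_mul_eq_mul_left hn (Nat.add_right_cancel hab)
  have hg : Summable (fun j => ((β * t) ^ (n * j + i) / ((n * j + i).factorial : ℝ))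
      * Real.exp (-(s * t))) := by
    have := (Real.summable_pow_div_factorial (β * t)).comp_injective hinj
    exact this.mul_right _
  refine Summable.of_nonneg_of_le (fun j => hfun_nonneg hc0 hβ n i j ht) (fun j => ?_) hg
  unfold hfun
  rw [mul_pow]
  have h1 : c ^ (j + 1) ≤ 1 := pow_le_one₀ hc0 hc1
  have : c ^ (j+1) * β ^ (n*j+i) / ((n*j+i).factorial : ℝ)
      ≤ 1 * β ^ (n*j+i) / ((n*j+i).factorial : ℝ) := by
    gcongr
  calc c ^ (j+1) * β ^ (n*j+i) / ((n*j+i).factorial : ℝ) * (t ^ (n*j+i) * Real.exp (-(s*t)))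
      ≤ 1 * β ^ (n*j+i) / ((n*j+i).factorial : ℝ) * (t ^ (n*j+i) * Real.exp (-(s*t))) := by
        gcongr
    _ = β ^ (n*j+i) * t ^ (n*j+i) / ((n*j+i).factorial : ℝ) * Real.exp (-(s*t)) := by ring

lemma pointwise (lam β u v : ℝ) (hlam : 0 < lam) (hβ : 0 < β) (hv : 0 < v)
    {n : ℕ} (hn : 1 ≤ n) {t : ℝ} (ht : 0 < t) :
    Real.exp (-(u * t)) *
        (Real.exp (-(β * t)) * (lam / (lam + v)) *
          ∑ k ∈ Finset.Icc 1 n,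
            (β * t) ^ (k - 1) * ml2 (n : ℝ) (k : ℝ) (lam * (β * t) ^ n / (lam + v)))
      = ∑' j : ℕ, ∑ i ∈ Finset.range n, hfun (lam / (lam + v)) β (β + u) n i j t := by
  have hlv : (0:ℝ) < lam + v := by linarith
  set c : ℝ := lam / (lam + v) with hc
  have hc0 : 0 ≤ c := by positivity
  have hc1 : c ≤ 1 := by rw [hc, div_le_one hlv]; linarith
  have hsum : ∀ i ∈ Finset.range n, Summable (fun j => hfun c β (β + u) n i j t) :=
    fun i _ => summable_hfun hc0 hc1 hβ.le hn i ht.le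
  rw [Summable.tsum_finsetSum hsum]
  rw [← Finset.Ico_add_one_right_eq_Icc, Finset.sum_Ico_eq_sum_range]
  simp only [Nat.add_sub_cancel]
  rw [Finset.mul_sum, Finset.mul_sum]
  refine Finset.sum_congr rfl (fun i _ => ?_)
  have hml : ml2 (n : ℝ) ((1 + i : ℕ) : ℝ) (lam * (β * t) ^ n / (lam + v))
      = ∑' j : ℕ, c ^ j * (β * t) ^ (n * j) / ((n * j + i).factorial : ℝ) := by
    unfold ml2
    refine tsum_congr (fun j => ?_)
    have hΓ : (n : ℝ) * (j : ℝ) + ((1 + i : ℕ) : ℝ) = ((n * j + i : ℕ) : ℝ) + 1 := by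
      push_cast; ring
    rw [hΓ, Real.Gamma_nat_eq_factorial]
    congr 1
    rw [show lam * (β * t) ^ n / (lam + v) = c * (β * t) ^ n by rw [hc]; ring,
      mul_pow, ← pow_mul]
  rw [show (1 + i - 1) = i from Nat.add_sub_cancel_left 1 i, hml, ← tsum_mul_left,
    ← tsum_mul_left, ← tsum_mul_left]
  refine tsum_congr (fun j => ?_)
  unfold hfun
  have he : Real.exp (-(u * t)) * Real.exp (-(β * t)) = Real.exp (-((β + u) * t)) := by
    rw [← Real.exp_add]; ring_nf
  rw [mul_pow β t i, mul_pow β t (n * j),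
    show n * j + i = i + n * j by ring, pow_add β i (n*j), pow_add t i (n*j), ← he]
  ring

lemma integrableOn_pow_exp' (m : ℕ) {r : ℝ} (hr : 0 < r) :
    IntegrableOn (fun t : ℝ => t ^ m * Real.exp (-(r * t))) (Set.Ioi 0) := by
  have h := integrableOn_rpow_mul_exp_neg_mul_rpow (p := 1) (s := (m : ℝ)) (b := r)
    (by exact lt_of_lt_of_le (by norm_num) (Nat.cast_nonneg m)) one_pos hr
  refine (h.congr_fun (fun t ht => ?_) measurableSet_Ioi)
  beta_reduce
  rw [Real.rpow_one, Real.rpow_natCast, neg_mul]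

lemma integral_pow_exp' (m : ℕ) {r : ℝ} (hr : 0 < r) :
    ∫ t in Set.Ioi (0:ℝ), t ^ m * Real.exp (-(r * t)) = (m.factorial : ℝ) / r ^ (m + 1) := by
  have h := integral_rpow_mul_exp_neg_mul_Ioi (a := (m : ℝ) + 1) (r := r) (by positivity) hr
  rw [show ((m : ℝ) + 1 - 1) = (m : ℝ) by ring, Real.Gamma_nat_eq_factorial] at h
  rw [show (∫ t in Set.Ioi (0:ℝ), t ^ m * Real.exp (-(r * t)))
      = ∫ t in Set.Ioi (0:ℝ), t ^ (m : ℝ) * Real.exp (-(r * t)) from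
    setIntegral_congr_fun measurableSet_Ioi (fun t ht => by rw [Real.rpow_natCast]), h]
  rw [show ((m : ℝ) + 1) = ((m + 1 : ℕ) : ℝ) by push_cast; ring, Real.rpow_natCast]
  rw [div_pow, one_pow]; ring

lemma integrable_hfun {c β s : ℝ} (hs : 0 < s) (n i j : ℕ) :
    IntegrableOn (hfun c β s n i j) (Set.Ioi 0) := by
  unfold hfun
  exact (integrableOn_pow_exp' (n * j + i) hs).const_mul _

lemma integral_hfun {c β s : ℝ} (hs : 0 < s) (n i j : ℕ) :
    ∫ t in Set.Ioi (0:ℝ), hfun c β s n i j t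
      = c ^ (j + 1) * β ^ (n * j + i) / s ^ (n * j + i + 1) := by
  unfold hfun
  rw [MeasureTheory.integral_const_mul, integral_pow_exp' _ hs]
  have hfac : (((n * j + i).factorial : ℝ)) ≠ 0 := Nat.cast_ne_zero.mpr (Nat.factorial_ne_zero _)
  field_simp

lemma val_eq {c β s : ℝ} (hs : s ≠ 0) (n i j : ℕ) :
    c ^ (j + 1) * β ^ (n * j + i) / s ^ (n * j + i + 1)
      = (c * β ^ n / s ^ n) ^ j * (c * β ^ i / s ^ (i + 1)) := by
  rw [div_pow, mul_pow, ← pow_mul, ← pow_mul]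
  rw [pow_add β, pow_add c j 1, pow_add s (n*j+i) 1, pow_add s (n*j) i]
  field_simp
  ring

lemma final_sum (lam β u v : ℝ) (hlam : 0 < lam) (hβ : 0 < β) (hu : 0 < u) (hv : 0 < v)
    (n : ℕ) (hn : 1 ≤ n) :
    ∑' j : ℕ, ∑ i ∈ Finset.range n,
        ((lam / (lam + v)) * β ^ n / (β + u) ^ n) ^ j *
          ((lam / (lam + v)) * β ^ i / (β + u) ^ (i + 1))
      = lam * ((β + u) ^ n - β ^ n) /
          (u * ((lam + v) * (β + u) ^ n - lam * β ^ n)) := by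
  have hlv : (0:ℝ) < lam + v := by linarith
  have hs : (0:ℝ) < β + u := by linarith
  set c : ℝ := lam / (lam + v) with hc
  set s : ℝ := β + u with hsd
  have hc0 : 0 ≤ c := by positivity
  have hc1 : c < 1 := by rw [hc, div_lt_one hlv]; linarith
  have hβs : β < s := by rw [hsd]; linarith
  have hbn : β ^ n < s ^ n := pow_lt_pow_left₀ hβs hβ.le (by omega)
  have hsn : (0:ℝ) < s ^ n := by positivity
  have hq0 : 0 ≤ c * β ^ n / s ^ n := by positivity
  have hq1 : c * β ^ n / s ^ n < 1 := by
    rw [mul_div_assoc]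
    calc c * (β ^ n / s ^ n) < 1 * 1 :=
      mul_lt_mul'' hc1 ((div_lt_one hsn).mpr hbn) hc0 (by positivity)
    _ = 1 := by ring
  simp_rw [← Finset.mul_sum]
  rw [tsum_mul_right, tsum_geometric_of_lt_one hq0 hq1]
  have hK : ∑ i ∈ Finset.range n, (c * β ^ i / s ^ (i + 1))
      = (c / s) * ∑ i ∈ Finset.range n, (β / s) ^ i := by
    rw [Finset.mul_sum]
    refine Finset.sum_congr rfl (fun i _ => ?_)
    rw [div_pow, pow_succ]
    field_simp
  have hx1 : β / s ≠ 1 := by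
    intro h
    rw [div_eq_one_iff_eq hs.ne'] at h
    linarith
  rw [hK, geom_sum_eq hx1]
  have h1q : 1 - c * β ^ n / s ^ n ≠ 0 := by
    intro h
    have : c * β ^ n / s ^ n = 1 := by linarith
    linarith
  have hden : (lam + v) * s ^ n - lam * β ^ n ≠ 0 := by
    have h1 : lam * β ^ n < lam * s ^ n := by nlinarith
    have h2 : lam * s ^ n ≤ (lam + v) * s ^ n := by nlinarith
    intro h; linarith
  have hxm1 : β / s - 1 ≠ 0 := by
    intro h
    apply hx1; linarith
  have hA : 1 - c * β ^ n / s ^ n = ((lam + v) * s ^ n - lam * β ^ n) / ((lam + v) * s ^ n) := by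
    rw [hc]; field_simp
  have hb1 : (β / s) ^ n - 1 = -((s ^ n - β ^ n) / s ^ n) := by
    rw [div_pow]; field_simp; ring
  have hb2 : β / s - 1 = -(u / s) := by
    rw [hsd]; field_simp; ring
  have hB : (c / s) * (((β / s) ^ n - 1) / ((β / s) - 1))
      = lam * (s ^ n - β ^ n) / ((lam + v) * (u * s ^ n)) := by
    rw [hb1, hb2, neg_div_neg_eq, hc]
    field_simp
  rw [hA, hB, inv_div]
  rw [div_mul_div_comm]
  rw [div_eq_div_iff (by positivity) (by
    have : 0 < (lam + v) * s ^ n - lam * β ^ n := by nlinarith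
    positivity)]
  ring

/-- double Laplace transform of the inverse compound
Poisson–Erlang process `Y^{(n)}(t)` in closed form. -/
theorem stmt16 (lam β : ℝ) (hlam : 0 < lam) (hβ : 0 < β)
    (n : ℕ) (hn : 1 ≤ n) (u v : ℝ) (hu : 0 < u) (hv : 0 < v) :
    (∫ t in Set.Ioi (0 : ℝ),
      Real.exp (-(u * t)) *
        (Real.exp (-(β * t)) * (lam / (lam + v)) *
          ∑ k ∈ Finset.Icc 1 n,
            (β * t) ^ (k - 1) * ml2 (n : ℝ) (k : ℝ) (lam * (β * t) ^ n / (lam + v))))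
    = lam * ((β + u) ^ n - β ^ n) /
        (u * ((lam + v) * (β + u) ^ n - lam * β ^ n)) := by
  have hlv : (0:ℝ) < lam + v := by linarith
  have hs : (0:ℝ) < β + u := by linarith
  set c : ℝ := lam / (lam + v) with hc
  set s : ℝ := β + u with hsd
  have hc0 : 0 ≤ c := by positivity
  have hc1 : c < 1 := by rw [hc, div_lt_one hlv]; linarith
  have hβs : β < s := by rw [hsd]; linarith
  have hbn : β ^ n < s ^ n := pow_lt_pow_left₀ hβs hβ.le (by omega)
  have hsn : (0:ℝ) < s ^ n := by positivity
  have hq0 : 0 ≤ c * β ^ n / s ^ n := by positivity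
  have hq1 : c * β ^ n / s ^ n < 1 := by
    rw [mul_div_assoc]
    calc c * (β ^ n / s ^ n) < 1 * 1 :=
      mul_lt_mul'' hc1 ((div_lt_one hsn).mpr hbn) hc0 (by positivity)
    _ = 1 := by ring
  -- value of each integral
  have hval : ∀ j : ℕ, (∫ t in Set.Ioi (0:ℝ), ∑ i ∈ Finset.range n, hfun c β s n i j t)
      = ∑ i ∈ Finset.range n,
          (c * β ^ n / s ^ n) ^ j * (c * β ^ i / s ^ (i + 1)) := by
    intro j
    rw [MeasureTheory.integral_finset_sum _ (fun i _ => integrable_hfun hs n i j)]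
    exact Finset.sum_congr rfl (fun i _ => by
      rw [integral_hfun hs n i j, val_eq hs.ne' n i j])
  have hint : ∀ j : ℕ,
      Integrable (fun t => ∑ i ∈ Finset.range n, hfun c β s n i j t)
        (volume.restrict (Set.Ioi 0)) :=
    fun j => integrable_finset_sum _ (fun i _ => integrable_hfun hs n i j)
  have hnorm : ∀ j : ℕ,
      (∫ t in Set.Ioi (0:ℝ), ‖∑ i ∈ Finset.range n, hfun c β s n i j t‖)
        = ∑ i ∈ Finset.range n,
            (c * β ^ n / s ^ n) ^ j * (c * β ^ i / s ^ (i + 1)) := by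
    intro j
    rw [show (∫ t in Set.Ioi (0:ℝ), ‖∑ i ∈ Finset.range n, hfun c β s n i j t‖)
        = ∫ t in Set.Ioi (0:ℝ), ∑ i ∈ Finset.range n, hfun c β s n i j t from
      setIntegral_congr_fun measurableSet_Ioi (fun t ht => Real.norm_of_nonneg
        (Finset.sum_nonneg (fun i _ => hfun_nonneg hc0 hβ.le n i j (le_of_lt ht))))]
    exact hval j
  have hsummable : Summable (fun j : ℕ =>
      ∫ t in Set.Ioi (0:ℝ), ‖∑ i ∈ Finset.range n, hfun c β s n i j t‖) := by
    rw [show (fun j : ℕ => ∫ t in Set.Ioi (0:ℝ),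
        ‖∑ i ∈ Finset.range n, hfun c β s n i j t‖)
      = fun j : ℕ => ∑ i ∈ Finset.range n,
          (c * β ^ n / s ^ n) ^ j * (c * β ^ i / s ^ (i + 1)) from funext hnorm]
    exact summable_sum (fun i _ =>
      (summable_geometric_of_lt_one hq0 hq1).mul_right _)
  rw [setIntegral_congr_fun measurableSet_Ioi
    (fun t ht => pointwise lam β u v hlam hβ hv hn ht)]
  rw [← MeasureTheory.integral_tsum_of_summable_integral_norm hint hsummable]
  rw [tsum_congr hval]
  exact final_sum lam β u v hlam hβ hu hv n hn
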